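/- The function V(x,t;y) = (1/(2√(πμt))) · exp[(a + c·y)·t + μc²t³/3 − (x − y − cμt²)²/(4μt)] satisfies, for t > 0, the linear PDE ∂V/∂t = (a + c·x)·V + μ·∂²V/∂x². -/

import Mathlib

/-- The fundamental solution V(x,t;y) satisfies the linear PDE
∂V/∂t = (a + cx)V + μ V_xx for t > 0. -/
theorem stmt_3 (a c μ y : ℝ) (hμ : 0 < μ)
    (V : ℝ → ℝ → ℝ)
    (hV : ∀ x t, V x t =
      (1 / (2 * Real.sqrt (Real.pi * μ * t))) *
        Real.exp ((a + c * y) * t + μ * c^2 * t^3 / 3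
          - (x - y - c * μ * t^2)^2 / (4 * μ * t))) :
    ∀ x : ℝ, ∀ t : ℝ, 0 < t →
      deriv (fun τ => V x τ) t
        = (a + c * x) * V x t + μ * deriv (deriv (fun ξ => V ξ t)) x := by
  intro x t ht
  have hπ := Real.pi_pos
  have hπμt : (0:ℝ) < Real.pi * μ * t := by positivity
  have hS : (0:ℝ) < Real.sqrt (Real.pi * μ * t) := Real.sqrt_pos.mpr hπμt
  have hS2 : Real.sqrt (Real.pi * μ * t) ^ 2 = Real.pi * μ * t :=
    Real.sq_sqrt hπμt.le
  have hμt : (4 * μ * t) ≠ 0 := by positivity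
  -- x-derivative
  have hVx : ∀ ξ : ℝ, HasDerivAt (fun ζ => V ζ t)
      (V ξ t * (-(ξ - y - c * μ * t^2) / (2 * μ * t))) ξ := by
    intro ξ
    simp only [hV]
    have h := (((((hasDerivAt_id ξ).sub_const y).sub_const (c * μ * t^2)).pow 2).div_const
      (4 * μ * t)).const_sub ((a + c * y) * t + μ * c^2 * t^3 / 3)
    have h2 : HasDerivAt (fun ζ => 1 / (2 * Real.sqrt (Real.pi * μ * t)) * Real.exp ((a + c * y) * t + μ * c^2 * t^3 / 3
        - (ζ - y - c * μ * t^2)^2 / (4 * μ * t))) _ ξ :=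
      h.exp.const_mul (1 / (2 * Real.sqrt (Real.pi * μ * t)))
    convert h2 using 1
    simp only [Pi.pow_apply, id_eq]
    push_cast
    field_simp
    ring
  have hderiv1 : deriv (fun ζ => V ζ t)
      = fun ξ => V ξ t * (-(ξ - y - c * μ * t^2) / (2 * μ * t)) :=
    funext fun ξ => (hVx ξ).deriv
  have hlin : HasDerivAt (fun ξ : ℝ => -(ξ - y - c * μ * t^2) / (2 * μ * t))
      (-1 / (2 * μ * t)) x := by
    have := (((hasDerivAt_id x).sub_const y).sub_const (c * μ * t^2)).neg.div_const (2 * μ * t)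
    simpa using this
  have hVxx := (hVx x).mul hlin
  -- t-derivative
  have hpre : HasDerivAt (fun τ => 1 / (2 * Real.sqrt (Real.pi * μ * τ)))
      (-(1 / (2 * Real.sqrt (Real.pi * μ * t))) / (2 * t)) t := by
    have hin : HasDerivAt (fun τ : ℝ => Real.pi * μ * τ) (Real.pi * μ) t := by
      simpa using (hasDerivAt_id t).const_mul (Real.pi * μ)
    have hsq := hin.sqrt hπμt.ne'
    have hg := hsq.const_mul (2:ℝ)
    have hne : (2 * Real.sqrt (Real.pi * μ * t)) ≠ 0 := by positivity
    have hdiv : HasDerivAt (fun τ => (1:ℝ) / (2 * Real.sqrt (Real.pi * μ * τ))) _ t :=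
      (hasDerivAt_const t (1:ℝ)).div hg hne
    convert hdiv using 1
    set S := Real.sqrt (Real.pi * μ * t) with hSdef
    rw [div_eq_div_iff (by positivity) (by positivity)]
    field_simp
    linear_combination (-1:ℝ) * hS2
  have hE : HasDerivAt (fun τ => (a + c * y) * τ + μ * c^2 * τ^3 / 3
      - (x - y - c * μ * τ^2)^2 / (4 * μ * τ))
      (((a + c * y) * 1 + μ * c^2 * ((3:ℕ) * t^2) / 3)
        - (((2:ℕ) * (x - y - c * μ * t^2)^1 * (-(c * μ * ((2:ℕ) * t^1 * 1)))) * (4 * μ * t)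
            - (x - y - c * μ * t^2)^2 * (4 * μ * 1)) / (4 * μ * t)^2) t := by
    have h1 : HasDerivAt (fun τ : ℝ => (a + c * y) * τ) ((a + c * y) * 1) t :=
      (hasDerivAt_id t).const_mul (a + c * y)
    have h2 : HasDerivAt (fun τ : ℝ => μ * c^2 * τ^3 / 3) (μ * c^2 * ((3:ℕ) * t^2) / 3) t := by
      have := ((hasDerivAt_pow 3 t).const_mul (μ * c^2)).div_const 3
      simpa using this
    have hn : HasDerivAt (fun τ : ℝ => x - y - c * μ * τ^2)
        (-(c * μ * ((2:ℕ) * t^1 * 1))) t := by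
      have : HasDerivAt (fun τ : ℝ => c * μ * τ^2) (c * μ * ((2:ℕ) * t^1 * 1)) t := by
        have := ((hasDerivAt_pow 2 t).const_mul (c * μ))
        simpa using this
      have h' := this.const_sub (x - y)
      convert h' using 2
    have hd : HasDerivAt (fun τ : ℝ => 4 * μ * τ) (4 * μ * 1) t := by
      simpa using (hasDerivAt_id t).const_mul (4 * μ)
    exact (h1.add h2).sub ((hn.pow 2).div hd hμt)
  have hVt := hpre.mul hE.exp
  have hVt' : HasDerivAt (fun τ => V x τ)
      (-(1 / (2 * Real.sqrt (Real.pi * μ * t))) / (2 * t) *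
          Real.exp ((a + c * y) * t + μ * c^2 * t^3 / 3
            - (x - y - c * μ * t^2)^2 / (4 * μ * t)) +
        1 / (2 * Real.sqrt (Real.pi * μ * t)) *
          (Real.exp ((a + c * y) * t + μ * c^2 * t^3 / 3
            - (x - y - c * μ * t^2)^2 / (4 * μ * t)) *
            (((a + c * y) * 1 + μ * c^2 * ((3:ℕ) * t^2) / 3)
        - (((2:ℕ) * (x - y - c * μ * t^2)^1 * (-(c * μ * ((2:ℕ) * t^1 * 1)))) * (4 * μ * t)
            - (x - y - c * μ * t^2)^2 * (4 * μ * 1)) / (4 * μ * t)^2))) t := by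
    simp only [hV]
    exact hVt
  rw [hVt'.deriv, hderiv1, (show HasDerivAt (fun ξ => V ξ t * (-(ξ - y - c * μ * t^2) / (2 * μ * t))) _ x from hVxx).deriv, hV x t]
  push_cast
  field_simp
  ring
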